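/- Let K be a nondegenerate triangle in ℝ². Then ρ_K²/|K| ≥ 1/6. If moreover θ⋆ ∈ (0, π/2) and every interior angle of K is at least θ⋆, then ρ_K²/|K| ≤ 1/(3 tan θ⋆). -/

import Mathlib

open MeasureTheory Real

open MeasureTheory Real

noncomputable def T2 : Set (ℝ × ℝ) := {q | 0 ≤ q.1 ∧ 0 ≤ q.2 ∧ q.1 + q.2 ≤ 1}

lemma measT2 : MeasurableSet T2 := by
  have : T2 = {q : ℝ × ℝ | 0 ≤ q.1} ∩ ({q | 0 ≤ q.2} ∩ {q | q.1 + q.2 ≤ 1}) := by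
    ext q; simp [T2, and_assoc]
  rw [this]
  exact ((isClosed_le continuous_const continuous_fst).inter
    ((isClosed_le continuous_const continuous_snd).inter
      (isClosed_le (continuous_fst.add continuous_snd) continuous_const))).measurableSet

lemma compactT2 : IsCompact T2 := by
  have hcl : IsClosed T2 := by
    have : T2 = {q : ℝ × ℝ | 0 ≤ q.1} ∩ ({q | 0 ≤ q.2} ∩ {q | q.1 + q.2 ≤ 1}) := by
      ext q; simp [T2, and_assoc]
    rw [this]
    exact (isClosed_le continuous_const continuous_fst).inter
      ((isClosed_le continuous_const continuous_snd).inter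
        (isClosed_le (continuous_fst.add continuous_snd) continuous_const))
  refine IsCompact.of_isClosed_subset (isCompact_Icc (a := ((0:ℝ),(0:ℝ))) (b := (1,1))) hcl ?_
  rintro ⟨x, y⟩ ⟨h1, h2, h3⟩
  constructor
  · exact ⟨h1, h2⟩
  · exact ⟨by dsimp at *; linarith, by dsimp at *; linarith⟩

lemma fubini_tri (f : ℝ × ℝ → ℝ) (hf : Continuous f) :
    ∫ q in T2, f q = ∫ x in (0:ℝ)..1, ∫ y in (0:ℝ)..(1 - x), f (x, y) := by
  have hint : IntegrableOn f T2 := hf.continuousOn.integrableOn_compact compactT2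
  rw [← integral_indicator measT2]
  rw [Measure.volume_eq_prod]
  rw [MeasureTheory.integral_prod]
  · have hx : ∀ x : ℝ, (∫ y, T2.indicator f (x, y)) =
        (Set.Icc (0:ℝ) 1).indicator (fun x => ∫ y in Set.Icc 0 (1 - x), f (x, y)) x := by
      intro x
      by_cases hx0 : 0 ≤ x
      · have hsec : (fun y => T2.indicator f (x, y)) =
            (Set.Icc (0:ℝ) (1 - x)).indicator (fun y => f (x, y)) := by
          funext y
          by_cases hy : y ∈ Set.Icc (0:ℝ) (1 - x)
          · rw [Set.indicator_of_mem hy]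
            exact Set.indicator_of_mem (show (x,y) ∈ T2 from ⟨hx0, hy.1, by have := hy.2; simp only []; linarith⟩) _
          · rw [Set.indicator_of_notMem hy, Set.indicator_of_notMem]
            intro h
            obtain ⟨h1, h2, h3⟩ := h
            exact hy ⟨h2, by simp only [] at h3 ⊢; linarith⟩
        rw [hsec, integral_indicator measurableSet_Icc]
        by_cases hx1 : x ≤ 1
        · rw [Set.indicator_of_mem (show x ∈ Set.Icc (0:ℝ) 1 from ⟨hx0, hx1⟩)]
        · rw [Set.indicator_of_notMem (by simp [hx1])]
          rw [Set.Icc_eq_empty (by intro h; exact hx1 (by linarith))]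
          simp
      · rw [Set.indicator_of_notMem (by simp [hx0])]
        have : (fun y => T2.indicator f (x, y)) = fun _ => (0:ℝ) := by
          funext y
          exact Set.indicator_of_notMem (fun h => hx0 h.1) _
        rw [this]; simp
    simp_rw [hx]
    rw [integral_indicator measurableSet_Icc, MeasureTheory.integral_Icc_eq_integral_Ioc,
      ← intervalIntegral.integral_of_le (by norm_num : (0:ℝ) ≤ 1)]
    refine intervalIntegral.integral_congr fun x hx => ?_
    rw [MeasureTheory.integral_Icc_eq_integral_Ioc]
    rw [Set.uIcc_of_le (by norm_num : (0:ℝ) ≤ 1)] at hx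
    exact (intervalIntegral.integral_of_le (by linarith [hx.2])).symm
  · rw [← Measure.volume_eq_prod]
    exact (integrable_indicator_iff measT2).mpr hint

lemma integ_quad (a b c B : ℝ) :
    ∫ y in (0:ℝ)..B, (a * y ^ 2 + b * y + c) = a * B ^ 3 / 3 + b * B ^ 2 / 2 + c * B := by
  have h1 : IntervalIntegrable (fun y : ℝ => a * y ^ 2) volume 0 B :=
    (continuous_const.mul (continuous_pow 2)).intervalIntegrable _ _
  have h2 : IntervalIntegrable (fun y : ℝ => b * y) volume 0 B :=
    (continuous_const.mul continuous_id).intervalIntegrable _ _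
  have h3 : IntervalIntegrable (fun y : ℝ => (c:ℝ)) volume 0 B :=
    intervalIntegrable_const
  rw [intervalIntegral.integral_add (h1.add h2) h3, intervalIntegral.integral_add h1 h2,
    intervalIntegral.integral_const_mul, intervalIntegral.integral_const_mul,
    integral_pow, integral_id, intervalIntegral.integral_const, smul_eq_mul]
  push_cast; ring

lemma integ_cubic (a b c d : ℝ) :
    ∫ x in (0:ℝ)..1, (a * x ^ 3 + b * x ^ 2 + c * x + d) = a / 4 + b / 3 + c / 2 + d := by
  have h0 : IntervalIntegrable (fun y : ℝ => a * y ^ 3) volume 0 1 :=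
    (continuous_const.mul (continuous_pow 3)).intervalIntegrable _ _
  have h1 : IntervalIntegrable (fun y : ℝ => b * y ^ 2) volume 0 1 :=
    (continuous_const.mul (continuous_pow 2)).intervalIntegrable _ _
  have h2 : IntervalIntegrable (fun y : ℝ => c * y) volume 0 1 :=
    (continuous_const.mul continuous_id).intervalIntegrable _ _
  have h3 : IntervalIntegrable (fun y : ℝ => (d:ℝ)) volume 0 1 :=
    intervalIntegrable_const
  rw [intervalIntegral.integral_add ((h0.add h1).add h2) h3,
    intervalIntegral.integral_add (h0.add h1) h2, intervalIntegral.integral_add h0 h1,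
    intervalIntegral.integral_const_mul, intervalIntegral.integral_const_mul,
    intervalIntegral.integral_const_mul,
    integral_pow, integral_pow, integral_id,
    intervalIntegral.integral_const, smul_eq_mul]
  push_cast; ring

lemma M0 : ∫ q in T2, (1:ℝ) = 1/2 := by
  rw [fubini_tri _ continuous_const]
  have : ∀ x : ℝ, (∫ y in (0:ℝ)..(1-x), (1:ℝ)) = 0 * x ^ 3 + 0 * x ^ 2 + (-1) * x + 1 := by
    intro x; rw [intervalIntegral.integral_const, smul_eq_mul]; ring
  rw [intervalIntegral.integral_congr (fun x _ => this x), integ_cubic]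
  norm_num

lemma M1 : ∫ q in T2, (q.1 - 1/3) ^ 2 = 1/36 := by
  rw [fubini_tri _ (by fun_prop)]
  have : ∀ x : ℝ, (∫ y in (0:ℝ)..(1-x), ((x:ℝ) - 1/3) ^ 2) =
      (-1) * x ^ 3 + (5/3) * x ^ 2 + (-7/9) * x + 1/9 := by
    intro x; rw [intervalIntegral.integral_const, smul_eq_mul]; ring
  rw [intervalIntegral.integral_congr (fun x _ => this x), integ_cubic]
  norm_num

lemma M2 : ∫ q in T2, (q.2 - 1/3) ^ 2 = 1/36 := by
  rw [fubini_tri _ (by fun_prop)]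
  have : ∀ x : ℝ, (∫ y in (0:ℝ)..(1-x), ((y:ℝ) - 1/3) ^ 2) =
      (-1/3) * x ^ 3 + (2/3) * x ^ 2 + (-4/9) * x + 1/9 := by
    intro x
    have h : ∀ y : ℝ, (y - 1/3) ^ 2 = 1 * y ^ 2 + (-2/3) * y + 1/9 := fun y => by ring
    rw [intervalIntegral.integral_congr (fun y _ => h y), integ_quad]; ring
  rw [intervalIntegral.integral_congr (fun x _ => this x), integ_cubic]
  norm_num

lemma M3 : ∫ q in T2, (q.1 - 1/3) * (q.2 - 1/3) = -1/72 := by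
  rw [fubini_tri _ (by fun_prop)]
  have : ∀ x : ℝ, (∫ y in (0:ℝ)..(1-x), ((x:ℝ) - 1/3) * (y - 1/3)) =
      (1/2) * x ^ 3 + (-5/6) * x ^ 2 + (7/18) * x + (-1/18) := by
    intro x
    have h : ∀ y : ℝ, (x - 1/3) * (y - 1/3) =
        0 * y ^ 2 + (x - 1/3) * y + (-(x - 1/3)/3) := fun y => by ring
    rw [intervalIntegral.integral_congr (fun y _ => h y), integ_quad]; ring
  rw [intervalIntegral.integral_congr (fun x _ => this x), integ_cubic]
  norm_num

noncomputable abbrev E2 := EuclideanSpace ℝ (Fin 2)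

noncomputable def ψ : E2 ≃ᵐ ℝ × ℝ :=
  (MeasurableEquiv.toLp 2 (Fin 2 → ℝ)).symm.trans (MeasurableEquiv.finTwoArrow)

example (p : E2) : ψ p = (p 0, p 1) := rfl
example (q : ℝ × ℝ) : (ψ.symm q) 0 = q.1 := rfl
example (q : ℝ × ℝ) : (ψ.symm q) 1 = q.2 := rfl

lemma ψ_mp : MeasurePreserving ψ volume volume :=
  (EuclideanSpace.volume_preserving_symm_measurableEquiv_toLp (Fin 2)).trans
    (volume_preserving_finTwoArrow ℝ)

noncomputable def Lmap (u v : E2) : E2 →ₗ[ℝ] E2 where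
  toFun p := p 0 • u + p 1 • v
  map_add' p q := by
    show (p + q) 0 • u + (p + q) 1 • v = _
    have h0 : (p + q) 0 = p 0 + q 0 := rfl
    have h1 : (p + q) 1 = p 1 + q 1 := rfl
    rw [h0, h1]; module
  map_smul' c p := by
    show (c • p) 0 • u + (c • p) 1 • v = _
    have h0 : (c • p) 0 = c * p 0 := rfl
    have h1 : (c • p) 1 = c * p 1 := rfl
    rw [h0, h1]; show _ = c • (p 0 • u + p 1 • v); module

noncomputable def Lc (u v : E2) : E2 →L[ℝ] E2 := (Lmap u v).toContinuousLinearMap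

lemma det_L (u v : E2) : (Lmap u v).det = u 0 * v 1 - u 1 * v 0 := by
  have b := (EuclideanSpace.basisFun (Fin 2) ℝ).toBasis
  rw [← LinearMap.det_toMatrix (EuclideanSpace.basisFun (Fin 2) ℝ).toBasis, Matrix.det_fin_two]
  simp [LinearMap.toMatrix_apply, Lmap, EuclideanSpace.basisFun_apply, EuclideanSpace.single_apply]
  ring


lemma cov (u v W0 : E2) (hinj : Function.Injective (Lc u v)) (g : E2 → ℝ) :
    ∫ x in (fun p => W0 + Lc u v p) '' (ψ ⁻¹' T2), g x
      = ∫ q in T2, |(Lmap u v).det| * g (W0 + (q.1 • u + q.2 • v)) := by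
  have hmeas : MeasurableSet (ψ ⁻¹' T2) := ψ.measurable measT2
  have hderiv : ∀ p ∈ ψ ⁻¹' T2, HasFDerivWithinAt (fun p => W0 + Lc u v p) (Lc u v) (ψ ⁻¹' T2) p :=
    fun p _ => ((Lc u v).hasFDerivAt.const_add W0).hasFDerivWithinAt
  have hinj' : Set.InjOn (fun p => W0 + Lc u v p) (ψ ⁻¹' T2) := by
    intro a _ b _ h
    exact hinj (by simpa using h)
  rw [integral_image_eq_integral_abs_det_fderiv_smul volume hmeas hderiv hinj' g]
  have : ∀ p : E2, |(Lc u v).det| • g (W0 + Lc u v p)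
      = (fun q : ℝ × ℝ => |(Lmap u v).det| * g (W0 + (q.1 • u + q.2 • v))) (ψ p) := by
    intro p
    rfl
  simp_rw [this]
  exact ψ_mp.setIntegral_preimage_emb ψ.measurableEmbedding
    (fun q : ℝ × ℝ => |(Lmap u v).det| * g (W0 + (q.1 • u + q.2 • v))) T2


noncomputable def ee0 : E2 := EuclideanSpace.single 0 1
noncomputable def ee1 : E2 := EuclideanSpace.single 1 1

lemma memT2 (x : E2) : x ∈ ψ ⁻¹' T2 ↔ 0 ≤ x 0 ∧ 0 ≤ x 1 ∧ x 0 + x 1 ≤ 1 := Iff.rfl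

lemma preimage_T2_eq : ψ ⁻¹' T2 = convexHull ℝ {0, ee0, ee1} := by
  apply le_antisymm
  · intro p hp
    obtain ⟨h0, h1, h2⟩ : 0 ≤ p 0 ∧ 0 ≤ p 1 ∧ p 0 + p 1 ≤ 1 := hp
    have key : p = Finset.centerMass Finset.univ ![1 - p 0 - p 1, p 0, p 1]
        ![(0:E2), ee0, ee1] := by
      rw [Finset.centerMass]
      rw [show ∑ i, (![1 - p 0 - p 1, p 0, p 1]) i = 1 by
        simp [Fin.sum_univ_three]; ring]
      rw [Fin.sum_univ_three]
      simp only [Matrix.cons_val_zero, Matrix.cons_val_one, Matrix.head_cons, inv_one, one_smul,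
        Matrix.cons_val_two, Matrix.tail_cons]
      ext i
      fin_cases i <;>
        simp [ee0, ee1, EuclideanSpace.single_apply, PiLp.add_apply, PiLp.smul_apply,
          smul_eq_mul]
    rw [key]
    apply Finset.centerMass_mem_convexHull
    · intro i _; fin_cases i <;> simp <;> linarith
    · rw [show ∑ i, (![1 - p 0 - p 1, p 0, p 1]) i = 1 by simp [Fin.sum_univ_three]; ring]; norm_num
    · intro i _; fin_cases i <;> simp
  · apply convexHull_min
    · rintro x (rfl | rfl | rfl) <;> rw [memT2]
      · exact ⟨le_refl 0, le_refl 0, by norm_num⟩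
      · refine ⟨?_, ?_, ?_⟩ <;> simp [ee0, EuclideanSpace.single_apply]
      · refine ⟨?_, ?_, ?_⟩ <;> simp [ee1, EuclideanSpace.single_apply]
    · intro x hx y hy a b ha hb hab
      rw [memT2] at hx hy ⊢
      obtain ⟨hx0, hx1, hx2⟩ : 0 ≤ x 0 ∧ 0 ≤ x 1 ∧ x 0 + x 1 ≤ 1 := hx
      obtain ⟨hy0, hy1, hy2⟩ : 0 ≤ y 0 ∧ 0 ≤ y 1 ∧ y 0 + y 1 ≤ 1 := hy
      have e0 : (a • x + b • y) 0 = a * x 0 + b * y 0 := rfl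
      have e1 : (a • x + b • y) 1 = a * x 1 + b * y 1 := rfl
      refine ⟨?_, ?_, ?_⟩
      · rw [e0]
        exact add_nonneg (mul_nonneg ha hx0) (mul_nonneg hb hy0)
      · rw [e1]
        exact add_nonneg (mul_nonneg ha hx1) (mul_nonneg hb hy1)
      · rw [e0, e1]
        nlinarith

noncomputable def φmap (u v W0 : E2) : E2 →ᵃ[ℝ] E2 :=
  AffineMap.mk' (fun p => W0 + Lc u v p) (Lmap u v) 0 (by
    intro p
    show W0 + Lc u v p = Lmap u v (p -ᵥ 0) +ᵥ (W0 + Lc u v 0)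
    have : Lc u v 0 = 0 := map_zero _
    rw [vsub_eq_sub, sub_zero, this, add_zero, vadd_eq_add]
    show W0 + Lc u v p = Lc u v p + W0
    abel)

lemma image_hull (W : Fin 3 → E2) :
    (fun p => W 0 + Lc (W 1 - W 0) (W 2 - W 0) p) '' (ψ ⁻¹' T2)
      = convexHull ℝ (Set.range W) := by
  set u := W 1 - W 0
  set v := W 2 - W 0
  have hφ : (fun p => W 0 + Lc u v p) = ⇑(φmap u v (W 0)) := rfl
  rw [preimage_T2_eq, hφ, AffineMap.image_convexHull]
  congr 1
  have h0 : φmap u v (W 0) 0 = W 0 := by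
    show W 0 + Lc u v 0 = W 0
    rw [map_zero, add_zero]
  have h1 : φmap u v (W 0) ee0 = W 1 := by
    show W 0 + (ee0 0 • u + ee0 1 • v) = W 1
    have : (ee0 0 : ℝ) = 1 := by simp [ee0, EuclideanSpace.single_apply]
    have h2 : (ee0 1 : ℝ) = 0 := by simp [ee0, EuclideanSpace.single_apply]
    rw [this, h2, one_smul, zero_smul, add_zero]
    show W 0 + (W 1 - W 0) = W 1
    abel
  have h2 : φmap u v (W 0) ee1 = W 2 := by
    show W 0 + (ee1 0 • u + ee1 1 • v) = W 2
    have : (ee1 0 : ℝ) = 0 := by simp [ee1, EuclideanSpace.single_apply]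
    have h2 : (ee1 1 : ℝ) = 1 := by simp [ee1, EuclideanSpace.single_apply]
    rw [this, h2, one_smul, zero_smul, zero_add]
    show W 0 + (W 2 - W 0) = W 2
    abel
  rw [Set.image_insert_eq, Set.image_insert_eq, Set.image_singleton, h0, h1, h2]
  ext x
  simp only [Set.mem_insert_iff, Set.mem_singleton_iff, Set.mem_range]
  constructor
  · rintro (rfl | rfl | rfl)
    exacts [⟨0, rfl⟩, ⟨1, rfl⟩, ⟨2, rfl⟩]
  · rintro ⟨i, rfl⟩
    fin_cases i
    exacts [Or.inl rfl, Or.inr (Or.inl rfl), Or.inr (Or.inr rfl)]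

lemma det_ne_zero (W : Fin 3 → E2) (hW : AffineIndependent ℝ W) :
    (W 1 - W 0) 0 * (W 2 - W 0) 1 - (W 1 - W 0) 1 * (W 2 - W 0) 0 ≠ 0 := by
  set u := W 1 - W 0 with hu
  set v := W 2 - W 0 with hv
  have li := (affineIndependent_iff_linearIndependent_vsub ℝ W 0).mp hW
  rw [Fintype.linearIndependent_iff] at li
  have hli : ∀ a b : ℝ, a • u + b • v = 0 → a = 0 ∧ b = 0 := by
    intro a b hab
    have h12 : ∀ x : Fin 3, x ∈ ({1, 2} : Finset (Fin 3)) ↔ x ≠ 0 := by decide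
    set g : {x : Fin 3 // x ≠ 0} → ℝ := fun i => if (i : Fin 3) = 1 then a else b with hg
    have hsum : ∑ i : {x : Fin 3 // x ≠ 0}, g i • (W i -ᵥ W 0) = a • u + b • v := by
      rw [← Finset.sum_subtype ({1, 2} : Finset (Fin 3)) h12
        (fun i => (if i = 1 then a else b) • (W i -ᵥ W 0))]
      rw [Finset.sum_insert (by decide), Finset.sum_singleton,
        if_pos rfl, if_neg (by decide : ¬(2:Fin 3) = 1), vsub_eq_sub, vsub_eq_sub]
    have hz := li g (by rw [hsum, hab])
    exact ⟨by simpa [hg] using hz ⟨1, by decide⟩, by simpa [hg] using hz ⟨2, by decide⟩⟩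
  intro hdet
  have c1 : v 1 • u + (-(u 1)) • v = 0 := by
    ext i
    fin_cases i <;>
      simp only [Fin.zero_eta, Fin.mk_one, PiLp.add_apply, PiLp.smul_apply, PiLp.zero_apply, smul_eq_mul] <;> linarith
  obtain ⟨hv1, hu1⟩ := hli _ _ c1
  have hu1' : u 1 = 0 := by linarith [neg_eq_zero.mp hu1]
  have c2 : (-(v 0)) • u + u 0 • v = 0 := by
    ext i
    fin_cases i <;>
      simp only [Fin.zero_eta, Fin.mk_one, PiLp.add_apply, PiLp.smul_apply, PiLp.zero_apply, smul_eq_mul] <;> nlinarith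
  obtain ⟨hv0, hu0⟩ := hli _ _ c2
  have hv0' : v 0 = 0 := by linarith [neg_eq_zero.mp hv0]
  have : (1:ℝ) • u + (0:ℝ) • v = 0 := by
    ext i
    fin_cases i <;>
      simp only [Fin.zero_eta, Fin.mk_one, PiLp.add_apply, PiLp.smul_apply, PiLp.zero_apply, smul_eq_mul] <;> nlinarith
  exact one_ne_zero (hli 1 0 this).1

lemma norm_comb_sq (u v : E2) (a b : ℝ) :
    ‖a • u + b • v‖ ^ 2
      = a ^ 2 * ‖u‖ ^ 2 + 2 * (a * b * (inner ℝ u v : ℝ)) + b ^ 2 * ‖v‖ ^ 2 := by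
  rw [norm_add_sq_real, norm_smul, norm_smul, real_inner_smul_left, real_inner_smul_right]
  simp only [Real.norm_eq_abs]
  rw [mul_pow, mul_pow, sq_abs, sq_abs]
  ring

lemma cross_sq (a b : E2) :
    (inner ℝ a a : ℝ) * (inner ℝ b b : ℝ) - (inner ℝ a b : ℝ) * (inner ℝ a b : ℝ)
      = (a 0 * b 1 - a 1 * b 0) ^ 2 := by
  simp only [PiLp.inner_apply, RCLike.inner_apply, conj_trivial, Fin.sum_univ_two]
  ring

lemma vertex_ineq (θ : ℝ) (hθ0 : 0 ≤ θ) (a b : E2)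
    (hang : θ ≤ InnerProductGeometry.angle a b) :
    (inner ℝ a b : ℝ) * Real.sin θ ≤ Real.cos θ * |a 0 * b 1 - a 1 * b 0| := by
  set α := InnerProductGeometry.angle a b with hα
  have hc := InnerProductGeometry.cos_angle_mul_norm_mul_norm a b
  have hs := InnerProductGeometry.sin_angle_mul_norm_mul_norm a b
  rw [cross_sq, Real.sqrt_sq_eq_abs] at hs
  have hπ : α ≤ π := InnerProductGeometry.angle_le_pi a b
  have hsin : 0 ≤ Real.sin (α - θ) :=
    Real.sin_nonneg_of_nonneg_of_le_pi (by linarith) (by linarith)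
  rw [Real.sin_sub] at hsin
  have hmul : 0 ≤ (Real.sin α * Real.cos θ - Real.cos α * Real.sin θ) * (‖a‖ * ‖b‖) :=
    mul_nonneg hsin (mul_nonneg (norm_nonneg _) (norm_nonneg _))
  rw [← hc, ← hs]
  nlinarith [hmul]

lemma Lc_inj (u v : E2) (hd : u 0 * v 1 - u 1 * v 0 ≠ 0) :
    Function.Injective (Lc u v) := by
  intro p q h
  have e0 : p 0 * u 0 + p 1 * v 0 = q 0 * u 0 + q 1 * v 0 := by
    have := congrFun (congrArg (fun x : E2 => (x : Fin 2 → ℝ)) h) 0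
    simpa [Lc, Lmap, LinearMap.coe_toContinuousLinearMap', PiLp.add_apply, PiLp.smul_apply,
      smul_eq_mul, mul_comm] using this
  have e1 : p 0 * u 1 + p 1 * v 1 = q 0 * u 1 + q 1 * v 1 := by
    have := congrFun (congrArg (fun x : E2 => (x : Fin 2 → ℝ)) h) 1
    simpa [Lc, Lmap, LinearMap.coe_toContinuousLinearMap', PiLp.add_apply, PiLp.smul_apply,
      smul_eq_mul, mul_comm] using this
  have h0 : p 0 = q 0 := by
    have : (p 0 - q 0) * (u 0 * v 1 - u 1 * v 0) = 0 := by linear_combination v 1 * e0 - v 0 * e1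
    rcases mul_eq_zero.mp this with h | h
    · linarith
    · exact absurd h hd
  have h1 : p 1 = q 1 := by
    have : (p 1 - q 1) * (u 0 * v 1 - u 1 * v 0) = 0 := by
      linear_combination u 0 * e1 - u 1 * e0
    rcases mul_eq_zero.mp this with h | h
    · linarith
    · exact absurd h hd
  ext i
  fin_cases i
  · exact h0
  · exact h1

lemma lower_aux (a b c d : ℝ) :
    3 * |a * d - b * c| ≤ 2 * (a ^ 2 + b ^ 2 + (c ^ 2 + d ^ 2) - (a * c + b * d)) := by
  rcases abs_cases (a * d - b * c) with ⟨he, _⟩ | ⟨he, _⟩ <;> rw [he] <;>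
    nlinarith [sq_nonneg (4*a - 2*c - 3*d), sq_nonneg (4*b + 3*c - 2*d),
      sq_nonneg (4*b - 2*d - 3*c), sq_nonneg (4*a + 3*d - 2*c), sq_nonneg c, sq_nonneg d]


/-- For a nondegenerate triangle `K` in `ℝ²` with barycentre `G` and gyration
radius `ρ_K` (`ρ_K² = (1/|K|) ∫_K ‖x−G‖²`), one has `ρ_K²/|K| ≥ 1/6`; and if all the
interior angles of `K` are at least `θ⋆ ∈ (0, π/2)` then `ρ_K²/|K| ≤ 1/(3 tan θ⋆)`. -/
theorem stmt_1
    (W : Fin 3 → EuclideanSpace ℝ (Fin 2)) (hW : AffineIndependent ℝ W)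
    (K : Set (EuclideanSpace ℝ (Fin 2))) (hK : K = convexHull ℝ (Set.range W))
    (A : ℝ) (hA : A = (volume K).toReal)
    (G : EuclideanSpace ℝ (Fin 2)) (hG : G = (3 : ℝ)⁻¹ • (W 0 + W 1 + W 2))
    (ρsq : ℝ) (hρ : ρsq = (1 / A) * ∫ x in K, ‖x - G‖ ^ 2) :
    1 / 6 ≤ ρsq / A ∧
      ∀ θs : ℝ, θs ∈ Set.Ioo 0 (π / 2) →
        (∀ i : Fin 3, θs ≤ EuclideanGeometry.angle (W (i + 1)) (W i) (W (i + 2))) →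
        ρsq / A ≤ 1 / (3 * tan θs) := by
  classical
  set u : E2 := W 1 - W 0 with hu
  set v : E2 := W 2 - W 0 with hv
  have hdne : u 0 * v 1 - u 1 * v 0 ≠ 0 := det_ne_zero W hW
  have hinj : Function.Injective (Lc u v) := Lc_inj u v hdne
  have hKimg : K = (fun p => W 0 + Lc u v p) '' (ψ ⁻¹' T2) := by
    rw [hK, ← image_hull W]
  set D : ℝ := |u 0 * v 1 - u 1 * v 0| with hD
  have hDpos : 0 < D := abs_pos.mpr hdne
  set P : ℝ := ‖u‖ ^ 2 + ‖v‖ ^ 2 - (inner ℝ u v : ℝ) with hP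
  -- area
  have hA1 : A = D * (1 / 2) := by
    have h1 : ∫ x in K, (1 : ℝ) = A := by
      rw [hA, setIntegral_const, smul_eq_mul, mul_one]; rfl
    rw [← h1, hKimg, cov u v (W 0) hinj (fun _ => (1 : ℝ))]
    rw [MeasureTheory.integral_const_mul, M0, det_L]
  have hApos : 0 < A := by rw [hA1]; positivity
  -- second moment
  have hNUc : ‖u‖ ^ 2 = u 0 ^ 2 + u 1 ^ 2 := by
    rw [← real_inner_self_eq_norm_sq]
    simp only [PiLp.inner_apply, RCLike.inner_apply, conj_trivial, Fin.sum_univ_two]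
    ring
  have hNVc : ‖v‖ ^ 2 = v 0 ^ 2 + v 1 ^ 2 := by
    rw [← real_inner_self_eq_norm_sq]
    simp only [PiLp.inner_apply, RCLike.inner_apply, conj_trivial, Fin.sum_univ_two]
    ring
  have hIPc : (inner ℝ u v : ℝ) = u 0 * v 0 + u 1 * v 1 := by
    simp [PiLp.inner_apply, Fin.sum_univ_two]
    ring
  have hI : ∫ x in K, ‖x - G‖ ^ 2 = D * (P / 36) := by
    rw [hKimg, cov u v (W 0) hinj]
    have hpt : ∀ q : ℝ × ℝ, |(Lmap u v).det| * ‖W 0 + (q.1 • u + q.2 • v) - G‖ ^ 2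
        = D * (‖u‖ ^ 2 * ((q.1 - 1/3) ^ 2)
            + (2 * (inner ℝ u v : ℝ)) * ((q.1 - 1/3) * (q.2 - 1/3))
            + ‖v‖ ^ 2 * ((q.2 - 1/3) ^ 2)) := by
      intro q
      rw [det_L]
      have hGd : W 0 + (q.1 • u + q.2 • v) - G = (q.1 - 1/3) • u + (q.2 - 1/3) • v := by
        rw [hG, hu, hv]
        module
      rw [hGd, norm_comb_sq]
      ring
    simp_rw [hpt]
    rw [MeasureTheory.integral_const_mul]
    congr 1
    have c1 : Continuous fun q : ℝ × ℝ => ‖u‖ ^ 2 * ((q.1 - 1/3) ^ 2) := by fun_prop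
    have c2 : Continuous fun q : ℝ × ℝ =>
        (2 * (inner ℝ u v : ℝ)) * ((q.1 - 1/3) * (q.2 - 1/3)) := by fun_prop
    have c3 : Continuous fun q : ℝ × ℝ => ‖v‖ ^ 2 * ((q.2 - 1/3) ^ 2) := by fun_prop
    have i1 : IntegrableOn (fun q : ℝ × ℝ => ‖u‖ ^ 2 * ((q.1 - 1/3) ^ 2)) T2 volume :=
      c1.continuousOn.integrableOn_compact compactT2
    have i2 : IntegrableOn (fun q : ℝ × ℝ =>
        (2 * (inner ℝ u v : ℝ)) * ((q.1 - 1/3) * (q.2 - 1/3))) T2 volume :=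
      c2.continuousOn.integrableOn_compact compactT2
    have i3 : IntegrableOn (fun q : ℝ × ℝ => ‖v‖ ^ 2 * ((q.2 - 1/3) ^ 2)) T2 volume :=
      c3.continuousOn.integrableOn_compact compactT2
    have i12 : IntegrableOn (fun q : ℝ × ℝ => ‖u‖ ^ 2 * ((q.1 - 1/3) ^ 2)
        + (2 * (inner ℝ u v : ℝ)) * ((q.1 - 1/3) * (q.2 - 1/3))) T2 volume := i1.add i2
    rw [MeasureTheory.integral_add i12 i3, MeasureTheory.integral_add i1 i2,
      MeasureTheory.integral_const_mul, MeasureTheory.integral_const_mul,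
      MeasureTheory.integral_const_mul, M1, M2, M3]
    rw [hP]
    ring
  have hρval : ρsq = P / 18 := by
    rw [hρ, hI, hA1]
    field_simp
    ring
  have hgoalval : ρsq / A = P / (9 * D) := by
    rw [hρval, hA1]
    have hDne : D ≠ 0 := ne_of_gt hDpos
    field_simp
    ring
  constructor
  · -- lower bound
    rw [hgoalval, div_le_div_iff₀ (by norm_num) (by positivity)]
    have key : 3 * D ≤ 2 * P := by
      rw [hD, hP, hNUc, hNVc, hIPc]
      exact lower_aux (u 0) (u 1) (v 0) (v 1)
    linarith
  · -- upper bound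
    rintro θs ⟨hθ1, hθ2⟩ hang
    have hπ : (0:ℝ) < π := Real.pi_pos
    have hsθ : 0 < Real.sin θs := Real.sin_pos_of_pos_of_lt_pi hθ1 (by linarith)
    have hcθ : 0 < Real.cos θs := Real.cos_pos_of_mem_Ioo ⟨by linarith, hθ2⟩
    -- three vertex inequalities
    have a0 : θs ≤ InnerProductGeometry.angle (W 1 - W 0) (W 2 - W 0) := by
      have h := hang 0
      rw [show ((0:Fin 3) + 1) = 1 from rfl, show ((0:Fin 3) + 2) = 2 from rfl] at h
      exact h
    have a1 : θs ≤ InnerProductGeometry.angle (W 2 - W 1) (W 0 - W 1) := by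
      have h := hang 1
      rw [show ((1:Fin 3) + 1) = 2 from rfl, show ((1:Fin 3) + 2) = 0 from rfl] at h
      exact h
    have a2 : θs ≤ InnerProductGeometry.angle (W 0 - W 2) (W 1 - W 2) := by
      have h := hang 2
      rw [show ((2:Fin 3) + 1) = 0 from rfl, show ((2:Fin 3) + 2) = 1 from rfl] at h
      exact h
    have v0i := vertex_ineq θs hθ1.le (W 1 - W 0) (W 2 - W 0) a0
    have v1i := vertex_ineq θs hθ1.le (W 2 - W 1) (W 0 - W 1) a1
    have v2i := vertex_ineq θs hθ1.le (W 0 - W 2) (W 1 - W 2) a2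
    -- rewrite crosses as D
    have cr0 : |(W 1 - W 0) 0 * (W 2 - W 0) 1 - (W 1 - W 0) 1 * (W 2 - W 0) 0| = D := by
      rw [hD, hu, hv]
    have cr1 : |(W 2 - W 1) 0 * (W 0 - W 1) 1 - (W 2 - W 1) 1 * (W 0 - W 1) 0| = D := by
      rw [hD]
      congr 1
      simp only [hu, hv, PiLp.sub_apply]
      ring
    have cr2 : |(W 0 - W 2) 0 * (W 1 - W 2) 1 - (W 0 - W 2) 1 * (W 1 - W 2) 0| = D := by
      rw [hD]
      congr 1
      simp only [hu, hv, PiLp.sub_apply]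
      ring
    rw [cr0] at v0i
    rw [cr1] at v1i
    rw [cr2] at v2i
    -- sum of inner products equals P
    have hsum : (inner ℝ (W 1 - W 0) (W 2 - W 0) : ℝ) + (inner ℝ (W 2 - W 1) (W 0 - W 1) : ℝ)
        + (inner ℝ (W 0 - W 2) (W 1 - W 2) : ℝ) = P := by
      rw [hP, hNUc, hNVc, hIPc]
      simp only [PiLp.inner_apply, RCLike.inner_apply, conj_trivial, Fin.sum_univ_two,
        hu, hv, PiLp.sub_apply]
      ring
    have key : P * Real.sin θs ≤ 3 * (Real.cos θs * D) := by
      rw [← hsum, add_mul, add_mul]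
      have h := add_le_add (add_le_add v0i v1i) v2i
      linarith [h]
    rw [hgoalval, Real.tan_eq_sin_div_cos,
      show (1:ℝ) / (3 * (Real.sin θs / Real.cos θs)) = Real.cos θs / (3 * Real.sin θs) by
        field_simp,
      div_le_div_iff₀ (by positivity) (by positivity)]
    linarith [key]
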